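/- arXiv:0806.0280 — 2 statements merged into one kernel-verified Lean document; each statement's English description precedes it below -/
import Mathlib

section
/- For every sufficiently large even n, τ_E(NC²_n) ≥ n²/8 + (n−2)/12; that is, Avoider has a strategy guaranteeing that his claimed edge set remains bipartite (contains no odd cycle) throughout at least his first ⌈n²/8 + (n−2)/12⌉ − 1 moves, so no Enforcer strategy can win before that. -/
/-- An edge of the complete graph `K_n` on vertex set `Fin n`:
a non-diagonal element of `Sym2 (Fin n)`. -/
abbrev Edge (n : ℕ) := {e : Sym2 (Fin n) // ¬ e.IsDiag}

/-- A position in the game: the pair (edges claimed by Avoider, edges claimed by Enforcer). -/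
abbrev Position (n : ℕ) := Finset (Edge n) × Finset (Edge n)

/-- A strategy assigns to each position an edge to claim. -/
abbrev Strategy (n : ℕ) := Position n → Edge n

/-- A strategy is legal if, whenever some edge is still unclaimed,
it selects a previously unclaimed edge. -/
def Legal (n : ℕ) (s : Strategy n) : Prop :=
  ∀ p : Position n, p.1 ∪ p.2 ≠ Finset.univ → s p ∉ p.1 ∪ p.2

/-- The position after `t` full rounds, Avoider moving first in each round. -/
def play (n : ℕ) (sA sE : Strategy n) : ℕ → Position n
  | 0 => (∅, ∅)
  | t + 1 =>
    let p := play n sA sE t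
    let a : Finset (Edge n) := insert (sA p) p.1
    (a, insert (sE (a, p.2)) p.2)

/-- Enforcer can force Avoider's claimed edge set to contain a losing set of `F`
by the end of Avoider's `t`-th move. -/
def EnforcerWinsBy (n : ℕ) (F : Set (Finset (Edge n))) (t : ℕ) : Prop :=
  ∃ sE : Strategy n, Legal n sE ∧ ∀ sA : Strategy n, Legal n sA →
    ∃ L ∈ F, L ⊆ (play n sA sE t).1

/-- The minimum number of moves Enforcer needs to win the Avoider–Enforcer game on `F`;
`⊤` if Enforcer cannot win. -/
noncomputable def tauE (n : ℕ) (F : Set (Finset (Edge n))) : ℕ∞ :=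
  sInf ((fun t : ℕ => (t : ℕ∞)) '' {t : ℕ | EnforcerWinsBy n F t})

/-- The simple graph on `Fin n` whose edges are the elements of `E`. -/
def toGraph (n : ℕ) (E : Finset (Edge n)) : SimpleGraph (Fin n) :=
  SimpleGraph.fromEdgeSet (Subtype.val '' (E : Set (Edge n)))

/-- `NC²_n`: the family of edge sets of non-bipartite (non-2-colorable) graphs on `Fin n`. -/
def NC2 (n : ℕ) : Set (Finset (Edge n)) :=
  {E | ¬ (toGraph n E).Colorable 2}


/-! ### Auxiliary development -/

open Finset
open scoped Classical

namespace NCLower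

variable {n : ℕ}

lemma exists_pairing {α : Type*} [DecidableEq α] :
    ∀ s : Finset α, Even s.card →
    ∃ f : α → α, (∀ v ∈ s, f v ∈ s ∧ f v ≠ v ∧ f (f v) = v) ∧ (∀ v, v ∉ s → f v = v) := by
  intro s
  induction s using Finset.strongInduction with
  | _ s ih =>
    intro hev
    rcases s.eq_empty_or_nonempty with rfl | ⟨a, ha⟩
    · exact ⟨id, by simp, by simp⟩
    · have hcne : s.card ≠ 0 := by
        simp only [ne_eq, Finset.card_eq_zero]
        exact Finset.nonempty_iff_ne_empty.1 ⟨a, ha⟩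
      have h2 : 2 ≤ s.card := by
        rcases hev with ⟨k, hk⟩; omega
      have hbne : (s.erase a).Nonempty := by
        rw [← Finset.card_pos, Finset.card_erase_of_mem ha]; omega
      obtain ⟨b, hb⟩ := hbne
      have hba : b ≠ a := Finset.ne_of_mem_erase hb
      have hbs : b ∈ s := Finset.mem_of_mem_erase hb
      have hts : (s.erase a).erase b ⊂ s :=
        Finset.ssubset_of_subset_of_ssubset (Finset.erase_subset _ _) (Finset.erase_ssubset ha)
      have htcard : ((s.erase a).erase b).card = s.card - 2 := by
        rw [Finset.card_erase_of_mem hb, Finset.card_erase_of_mem ha]; omega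
      have htev : Even ((s.erase a).erase b).card := by
        rcases hev with ⟨k, hk⟩; exact ⟨k - 1, by omega⟩
      obtain ⟨g, hg1, hg2⟩ := ih _ hts htev
      have hmemt : ∀ v, v ∈ s → v ≠ a → v ≠ b → v ∈ (s.erase a).erase b := fun v hv h1 h2 =>
        Finset.mem_erase.2 ⟨h2, Finset.mem_erase.2 ⟨h1, hv⟩⟩
      refine ⟨fun v => if v = a then b else if v = b then a else g v, ?_, ?_⟩
      · intro v hv
        dsimp only
        by_cases hva : v = a
        · rw [if_pos hva, if_neg hba, if_pos rfl]
          subst hva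
          exact ⟨hbs, fun h => hba h, rfl⟩
        · by_cases hvb : v = b
          · rw [if_neg hva, if_pos hvb, if_pos rfl]
            subst hvb
            exact ⟨ha, fun h => hva h.symm, rfl⟩
          · have hvt := hmemt v hv hva hvb
            obtain ⟨m1, m2, m3⟩ := hg1 v hvt
            have hga : g v ≠ a := fun h =>
              (Finset.mem_erase.1 (Finset.mem_erase.1 m1).2).1 h
            have hgb : g v ≠ b := fun h => (Finset.mem_erase.1 m1).1 h
            rw [if_neg hva, if_neg hvb, if_neg hga, if_neg hgb]
            exact ⟨Finset.mem_of_mem_erase (Finset.mem_of_mem_erase m1), m2, m3⟩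
      · intro v hv
        have hva : v ≠ a := fun h => hv (h ▸ ha)
        have hvb : v ≠ b := fun h => hv (h ▸ hbs)
        dsimp only
        rw [if_neg hva, if_neg hvb]
        exact hg2 v (fun h => hv (Finset.mem_of_mem_erase (Finset.mem_of_mem_erase h)))


noncomputable def eFst (e : Sym2 (Fin n)) : Fin n := (Quot.out e).1
noncomputable def eSnd (e : Sym2 (Fin n)) : Fin n := (Quot.out e).2
lemma eMk (e : Sym2 (Fin n)) : s(eFst e, eSnd e) = e := by
  show Sym2.mk _ _ = e; rw [eFst, eSnd, Sym2.mk]; exact e.out_eq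
lemma eNe (e : Sym2 (Fin n)) (h : ¬ e.IsDiag) : eFst e ≠ eSnd e := by
  intro hc; exact h (by rw [← eMk e]; exact (Sym2.mk_isDiag_iff).2 hc)
lemma mem_e (e : Sym2 (Fin n)) (u : Fin n) : u ∈ e ↔ u = eFst e ∨ u = eSnd e := by
  conv_lhs => rw [← eMk e]
  exact Sym2.mem_iff

def covered (A : Finset (Edge n)) : Finset (Fin n) :=
  univ.filter (fun v => ∃ e ∈ A, v ∈ e.val)
def IsMatching (A : Finset (Edge n)) : Prop :=
  ∀ e ∈ A, ∀ g ∈ A, e ≠ g → ∀ v : Fin n, v ∈ e.val → v ∉ g.val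
def freeE (p : Position n) : Finset (Edge n) := univ \ (p.1 ∪ p.2)
noncomputable def freshP (p : Position n) : Finset (Edge n) :=
  (freeE p).filter (fun e => ∀ v ∈ e.val, v ∉ covered p.1)

lemma covered_card {A : Finset (Edge n)} (h : IsMatching A) :
    (covered A).card = 2 * A.card := by
  have hc : covered A = A.biUnion (fun e => {eFst e.val, eSnd e.val}) := by
    ext v
    simp only [covered, mem_filter, mem_univ, true_and, mem_biUnion, mem_insert,
      mem_singleton]
    constructor
    · rintro ⟨e, he, hv⟩
      exact ⟨e, he, (mem_e e.val v).1 hv⟩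
    · rintro ⟨e, he, hv⟩
      exact ⟨e, he, (mem_e e.val v).2 hv⟩
  rw [hc, card_biUnion, mul_comm]
  · rw [Finset.sum_congr rfl (fun e he => ?_), Finset.sum_const, smul_eq_mul]
    rw [card_insert_of_notMem (by simpa using (eNe e.val e.2)), card_singleton]
  · intro e he g hg hne
    rw [Function.onFun, Finset.disjoint_left]
    intro v hv hv2
    have h1 : v ∈ e.val := by
      rw [mem_e]; simpa using hv
    have h2 : v ∈ g.val := by
      rw [mem_e]; simpa using hv2
    exact h e he g hg hne v h1 h2

lemma card_edge_univ : (univ : Finset (Edge n)).card = n.choose 2 := by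
  rw [Finset.card_univ]
  have h := Sym2.card_subtype_not_diag (α := Fin n)
  rwa [Fintype.card_fin] at h

lemma freshP_nonempty {p : Position n} {t : ℕ}
    (hA : (covered p.1).card ≤ 2 * t) (hcard : (p.1 ∪ p.2).card ≤ 2 * t)
    (hbig : 2 * t < (n - 2 * t).choose 2) : (freshP p).Nonempty := by
  set F := (univ : Finset (Fin n)) \ covered p.1 with hF
  have hFcard : n - 2 * t ≤ F.card := by
    rw [hF, card_sdiff_of_subset (subset_univ _), card_univ, Fintype.card_fin]
    omega
  set S := F.offDiag.image Sym2.mk.uncurry with hS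
  have hScard : S.card = F.card.choose 2 := Sym2.card_image_offDiag F
  set claimed := (p.1 ∪ p.2).image Subtype.val with hclaimed
  have hclcard : claimed.card ≤ 2 * t := le_trans (card_image_le) hcard
  have hlt : claimed.card < S.card := by
    have : (n - 2*t).choose 2 ≤ F.card.choose 2 := Nat.choose_le_choose 2 hFcard
    omega
  have hnsub : ¬ S ⊆ claimed := fun hsub => absurd (card_le_card hsub) (by omega)
  obtain ⟨z, hzS, hzc⟩ := Finset.not_subset.1 hnsub
  obtain ⟨⟨a, b⟩, hab, rfl⟩ := mem_image.1 hzS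
  rw [mem_offDiag] at hab
  obtain ⟨haF, hbF, hne⟩ := hab
  have hnd : ¬ (s(a, b)).IsDiag := by
    rw [Sym2.mk_isDiag_iff]; exact hne
  refine ⟨⟨s(a,b), hnd⟩, ?_⟩
  rw [freshP, mem_filter]
  constructor
  · rw [freeE, mem_sdiff]
    refine ⟨mem_univ _, fun hc => hzc ?_⟩
    rw [hclaimed, mem_image]
    exact ⟨_, hc, rfl⟩
  · intro v hv
    have : v = a ∨ v = b := Sym2.mem_iff.1 hv
    rcases this with rfl | rfl
    · exact (mem_sdiff.1 haF).2
    · exact (mem_sdiff.1 hbF).2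

/-- the side of vertex `v` under pair-involution `f` and flip choice `τ` -/
def sig (f : Fin n → Fin n) (τ : Fin n → Bool) (v : Fin n) : Bool :=
  if v < f v then τ v else !τ (f v)

lemma sig_f {f : Fin n → Fin n} (τ : Fin n → Bool) (hinv : ∀ v, f (f v) = v)
    (hne : ∀ v, f v ≠ v) (v : Fin n) : sig f τ (f v) = !(sig f τ v) := by
  rcases lt_or_gt_of_ne (hne v) with h | h
  · have h2 : f v < f (f v) := by rw [hinv v]; exact h
    rw [sig, if_pos h2, sig, if_neg (not_lt.2 h.le), Bool.not_not]
  · have h2 : ¬ f v < f (f v) := by rw [hinv v]; exact not_lt.2 h.le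
    rw [sig, if_neg h2, hinv v, sig, if_pos h]

def Xside (f : Fin n → Fin n) (τ : Fin n → Bool) : Finset (Fin n) :=
  univ.filter (fun v => sig f τ v = true)
def Yside (f : Fin n → Fin n) (τ : Fin n → Bool) : Finset (Fin n) :=
  univ.filter (fun v => sig f τ v = false)

lemma card_side_add (f : Fin n → Fin n) (τ : Fin n → Bool) :
    (Xside f τ).card + (Yside f τ).card = n := by
  have h := card_filter_add_card_filter_not (s := (univ : Finset (Fin n)))
    (p := fun v => sig f τ v = true)
  rw [card_univ, Fintype.card_fin] at h
  rw [Xside, Yside]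
  have h2 : (univ.filter (fun v => sig f τ v = false)) =
      (univ.filter (fun a => ¬ sig f τ a = true)) := by
    apply filter_congr
    intro v _
    simp
  rw [h2, h]

lemma card_side_eq {f : Fin n → Fin n} (τ : Fin n → Bool) (hinv : ∀ v, f (f v) = v)
    (hne : ∀ v, f v ≠ v) : (Xside f τ).card = (Yside f τ).card := by
  apply Finset.card_bij (fun v _ => f v)
  · intro v hv
    rw [Xside, mem_filter] at hv
    rw [Yside, mem_filter, sig_f τ hinv hne, hv.2]
    simp
  · intro a ha b hb hab
    have h := congrArg f hab
    rwa [hinv, hinv] at h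
  · intro b hb
    refine ⟨f b, ?_, hinv b⟩
    rw [Yside, mem_filter] at hb
    rw [Xside, mem_filter, sig_f τ hinv hne, hb.2]
    simp

def monoP (f : Fin n → Fin n) (τ : Fin n → Bool) (e : Edge n) : Prop :=
  sig f τ (eFst e.val) = sig f τ (eSnd e.val)

noncomputable def crossE (f : Fin n → Fin n) (τ : Fin n → Bool) : Finset (Edge n) :=
  univ.filter (fun e => ¬ monoP f τ e)

lemma mono_iff_of_val {f : Fin n → Fin n} {τ : Fin n → Bool} {e : Edge n} {u v : Fin n}
    (huv : e.val = s(u,v)) : monoP f τ e ↔ (sig f τ u = sig f τ v) := by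
  have h1 : (eFst e.val = u ∧ eSnd e.val = v) ∨ (eFst e.val = v ∧ eSnd e.val = u) :=
    Sym2.eq_iff.1 (by rw [eMk e.val, huv])
  rcases h1 with ⟨h1, h2⟩ | ⟨h1, h2⟩
  · rw [monoP, h1, h2]
  · rw [monoP, h1, h2]
    exact ⟨fun h => h.symm, fun h => h.symm⟩

lemma card_crossE {f : Fin n → Fin n} (τ : Fin n → Bool) :
    (crossE f τ).card = (Xside f τ).card * (Yside f τ).card := by
  classical
  rw [← card_product]
  set i : Edge n → Fin n × Fin n := fun e =>
    if sig f τ (eFst e.val) = true then (eFst e.val, eSnd e.val)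
    else (eSnd e.val, eFst e.val) with hi
  have hival : ∀ e : Edge n, s((i e).1, (i e).2) = e.val := by
    intro e
    by_cases h : sig f τ (eFst e.val) = true
    · rw [hi]; dsimp only; rw [if_pos h]; exact eMk e.val
    · rw [hi]; dsimp only; rw [if_neg h, Sym2.eq_swap]; exact eMk e.val
  apply Finset.card_bij (fun e _ => i e)
  · intro e he
    rw [crossE, mem_filter, monoP] at he
    rw [mem_product]
    by_cases h : sig f τ (eFst e.val) = true
    · rw [hi]; dsimp only; rw [if_pos h]
      refine ⟨mem_filter.2 ⟨mem_univ _, h⟩, mem_filter.2 ⟨mem_univ _, ?_⟩⟩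
      cases hsnd : sig f τ (eSnd e.val)
      · rfl
      · exact absurd (h.trans hsnd.symm) he.2
    · rw [hi]; dsimp only; rw [if_neg h]
      rw [Bool.not_eq_true] at h
      refine ⟨mem_filter.2 ⟨mem_univ _, ?_⟩, mem_filter.2 ⟨mem_univ _, h⟩⟩
      cases hsnd : sig f τ (eSnd e.val)
      · exact absurd (hsnd.trans h.symm) (fun hc => he.2 hc.symm)
      · rfl
  · intro a ha b hb hab
    apply Subtype.ext
    rw [← hival a, ← hival b, hab]
  · rintro ⟨x, y⟩ hxy
    rw [mem_product] at hxy
    have hx : sig f τ x = true := (mem_filter.1 hxy.1).2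
    have hy : sig f τ y = false := (mem_filter.1 hxy.2).2
    have hxyne : x ≠ y := fun hc => by rw [hc, hy] at hx; exact Bool.false_ne_true hx
    have hnd : ¬ (s(x,y) : Sym2 (Fin n)).IsDiag := by
      rw [Sym2.mk_isDiag_iff]; exact hxyne
    refine ⟨⟨s(x,y), hnd⟩, mem_filter.2 ⟨mem_univ _, ?_⟩, ?_⟩
    · rw [mono_iff_of_val rfl, hx, hy]
      simp
    · have h1 : (eFst (s(x,y) : Sym2 (Fin n)) = x ∧ eSnd (s(x,y) : Sym2 (Fin n)) = y) ∨
          (eFst (s(x,y) : Sym2 (Fin n)) = y ∧ eSnd (s(x,y) : Sym2 (Fin n)) = x) :=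
        Sym2.eq_iff.1 (eMk _)
      rcases h1 with ⟨h1, h2⟩ | ⟨h1, h2⟩
      · rw [hi]; dsimp only; rw [h1, h2, if_pos hx]
      · rw [hi]; dsimp only; rw [h1, h2]
        rw [if_neg (by rw [hy]; exact Bool.false_ne_true)]

noncomputable def flipP (f : Fin n → Fin n) (τ : Fin n → Bool) (w : Fin n) : Fin n → Bool :=
  Function.update τ (if w < f w then w else f w) (!(τ (if w < f w then w else f w)))

lemma flipP_invol (f : Fin n → Fin n) (τ : Fin n → Bool) (w : Fin n) :
    flipP f (flipP f τ w) w = τ := by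
  set r := if w < f w then w else f w with hr
  have h1 : flipP f τ w r = !(τ r) := by
    rw [flipP, ← hr, Function.update_self]
  have h2 : ∀ u, u ≠ r → flipP f τ w u = τ u := by
    intro u hu
    rw [flipP, ← hr, Function.update_of_ne hu]
  funext u
  by_cases hu : u = r
  · subst hu
    rw [flipP, ← hr, Function.update_self, h1, Bool.not_not]
  · rw [flipP, ← hr, Function.update_of_ne hu, h2 u hu]

lemma sig_flipP_self {f : Fin n → Fin n} (τ : Fin n → Bool) (w : Fin n) :
    sig f (flipP f τ w) w = !(sig f τ w) := by
  by_cases h : w < f w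
  · rw [sig, if_pos h, sig, if_pos h, flipP, if_pos h, Function.update_self]
  · rw [sig, if_neg h, sig, if_neg h, flipP, if_neg h, Function.update_self]

lemma sig_flipP_other {f : Fin n → Fin n} (hinv : ∀ v, f (f v) = v) (τ : Fin n → Bool)
    (w u : Fin n) (hu1 : u ≠ w) (hu2 : u ≠ f w) :
    sig f (flipP f τ w) u = sig f τ u := by
  have hfu1 : f u ≠ w := fun hc => hu2 (by rw [← hc, hinv])
  have hfu2 : f u ≠ f w := fun hc => hu1 (by
    have := congrArg f hc
    rwa [hinv, hinv] at this)
  have hur : ∀ r, r = w ∨ r = f w → u ≠ r ∧ f u ≠ r := by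
    rintro r (rfl | rfl)
    exacts [⟨hu1, hfu1⟩, ⟨hu2, hfu2⟩]
  set r := if w < f w then w else f w with hr
  have hrw : r = w ∨ r = f w := by
    rw [hr]; split <;> simp
  obtain ⟨h1, h2⟩ := hur r hrw
  rw [sig, sig, flipP, ← hr, Function.update_of_ne h1, Function.update_of_ne h2]

lemma mono_flipP {f : Fin n → Fin n} (hinv : ∀ v, f (f v) = v) (τ : Fin n → Bool)
    (e : Edge n) (hf : f (eFst e.val) ≠ eSnd e.val) :
    monoP f (flipP f τ (eSnd e.val)) e ↔ ¬ monoP f τ e := by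
  have hne : eFst e.val ≠ eSnd e.val := eNe e.val e.2
  have hne2 : eFst e.val ≠ f (eSnd e.val) := by
    intro hc
    apply hf
    rw [hc, hinv]
  rw [monoP, monoP, sig_flipP_other hinv τ _ _ hne hne2, sig_flipP_self]
  cases sig f τ (eFst e.val) <;> cases sig f τ (eSnd e.val) <;> simp

lemma exists_waste {f : Fin n → Fin n} (hinv : ∀ v, f (f v) = v)
    (E' : Finset (Edge n)) (hE' : ∀ e ∈ E', f (eFst e.val) ≠ eSnd e.val) :
    ∃ τ : Fin n → Bool, E'.card ≤ 2 * (E'.filter (fun e => monoP f τ e)).card := by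
  classical
  rcases E'.eq_empty_or_nonempty with rfl | hEne
  · exact ⟨fun _ => true, by simp⟩
  by_contra hcon
  push_neg at hcon
  have hkey : ∀ e ∈ E', 2 * ((univ : Finset (Fin n → Bool)).filter
      (fun τ => monoP f τ e)).card = 2 ^ n := by
    intro e he
    have hbij : ((univ : Finset (Fin n → Bool)).filter (fun τ => monoP f τ e)).card =
        ((univ : Finset (Fin n → Bool)).filter (fun τ => ¬ monoP f τ e)).card := by
      apply Finset.card_bij (fun τ _ => flipP f τ (eSnd e.val))
      · intro τ hτ
        rw [mem_filter] at hτ ⊢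
        refine ⟨mem_univ _, ?_⟩
        rw [mono_flipP hinv τ e (hE' e he)]
        exact fun hc => hc hτ.2
      · intro a _ b _ hab
        have := congrArg (fun τ => flipP f τ (eSnd e.val)) hab
        rwa [flipP_invol, flipP_invol] at this
      · intro τ hτ
        rw [mem_filter] at hτ
        refine ⟨flipP f τ (eSnd e.val), mem_filter.2 ⟨mem_univ _, ?_⟩, flipP_invol f τ _⟩
        rw [mono_flipP hinv _ e (hE' e he)]
        exact hτ.2
    have hsum := card_filter_add_card_filter_not
      (s := (univ : Finset (Fin n → Bool))) (p := fun τ => monoP f τ e)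
    rw [card_univ, Fintype.card_fun, Fintype.card_bool, Fintype.card_fin] at hsum
    omega
  -- total double counting
  have hS : 2 * ∑ τ : Fin n → Bool, (E'.filter (fun e => monoP f τ e)).card
      = E'.card * 2 ^ n := by
    have h1 : ∀ τ : Fin n → Bool, (E'.filter (fun e => monoP f τ e)).card
        = ∑ e ∈ E', if monoP f τ e then 1 else 0 := by
      intro τ; rw [Finset.card_filter]
    calc 2 * ∑ τ : Fin n → Bool, (E'.filter (fun e => monoP f τ e)).card
        = 2 * ∑ τ : Fin n → Bool, ∑ e ∈ E', if monoP f τ e then 1 else 0 := by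
          rw [Finset.sum_congr rfl (fun τ _ => h1 τ)]
      _ = 2 * ∑ e ∈ E', ∑ τ : Fin n → Bool, if monoP f τ e then 1 else 0 := by
          rw [Finset.sum_comm]
      _ = ∑ e ∈ E', 2 * ((univ : Finset (Fin n → Bool)).filter
            (fun τ => monoP f τ e)).card := by
          rw [Finset.mul_sum]
          refine Finset.sum_congr rfl (fun e he => ?_)
          rw [Finset.card_filter]
      _ = ∑ e ∈ E', 2 ^ n := Finset.sum_congr rfl hkey
      _ = E'.card * 2 ^ n := by rw [Finset.sum_const, smul_eq_mul]
  have hub : ∀ τ : Fin n → Bool, 2 * (E'.filter (fun e => monoP f τ e)).card + 1 ≤ E'.card :=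
    fun τ => hcon τ
  have : 2 * ∑ τ : Fin n → Bool, (E'.filter (fun e => monoP f τ e)).card
      ≤ (E'.card - 1) * 2 ^ n := by
    rw [Finset.mul_sum]
    calc ∑ τ : Fin n → Bool, 2 * (E'.filter (fun e => monoP f τ e)).card
        ≤ ∑ _τ : Fin n → Bool, (E'.card - 1) := by
          refine Finset.sum_le_sum (fun τ _ => ?_)
          have := hub τ
          omega
      _ = (E'.card - 1) * 2 ^ n := by
          rw [Finset.sum_const, smul_eq_mul, card_univ, Fintype.card_fun,
            Fintype.card_bool, Fintype.card_fin, mul_comm]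
  rw [hS] at this
  have hpos : 0 < 2 ^ n := pow_pos (by norm_num) n
  have hcard1 : 1 ≤ E'.card := Finset.card_pos.2 hEne
  have h2 : (E'.card - 1) * 2 ^ n < E'.card * 2 ^ n := by
    have : E'.card - 1 < E'.card := by omega
    exact Nat.mul_lt_mul_of_lt_of_le this (le_refl _) hpos
  omega
lemma exists_invol (A : Finset (Edge n)) (hM : IsMatching A)
    (hev : Even ((univ \ covered A)).card) :
    ∃ f : Fin n → Fin n, (∀ v, f (f v) = v) ∧ (∀ v, f v ≠ v) ∧
      (∀ (v : Fin n), ∀ e ∈ A, v ∈ e.val → s(v, f v) = e.val) ∧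
      (∀ v, v ∉ covered A → f v ∉ covered A) := by
  obtain ⟨fL, hfL1, hfL2⟩ := exists_pairing (univ \ covered A) hev
  have covmem : ∀ v : Fin n, v ∈ covered A ↔ ∃ e, e ∈ A ∧ v ∈ e.val := by
    intro v
    rw [covered, mem_filter]
    simp
  set f : Fin n → Fin n := fun v =>
    if h : ∃ e, e ∈ A ∧ v ∈ e.val then Sym2.Mem.other h.choose_spec.2 else fL v with hf
  -- uniqueness of containing edge
  have huniq : ∀ (v : Fin n) (e : Edge n), e ∈ A → v ∈ e.val →
      ∀ (h : ∃ e, e ∈ A ∧ v ∈ e.val), h.choose = e := by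
    intro v e he hv h
    by_contra hne
    exact hM h.choose h.choose_spec.1 e he hne v h.choose_spec.2 hv
  have hspec : ∀ (v : Fin n) (e : Edge n), e ∈ A → v ∈ e.val → s(v, f v) = e.val := by
    intro v e he hv
    have hex : ∃ e, e ∈ A ∧ v ∈ e.val := ⟨e, he, hv⟩
    have hstep : f v = Sym2.Mem.other hex.choose_spec.2 := by
      rw [hf]; dsimp only; rw [dif_pos hex]
    calc s(v, f v) = hex.choose.val := by rw [hstep]; exact Sym2.other_spec _
      _ = e.val := congrArg Subtype.val (huniq v e he hv hex)
  have hnefix : ∀ v, f v ≠ v := by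
    intro v hc
    by_cases h : ∃ e, e ∈ A ∧ v ∈ e.val
    · obtain ⟨e, he, hv⟩ := h
      have h2 := hspec v e he hv
      rw [hc] at h2
      exact e.2 (by rw [← h2]; exact Sym2.mk_isDiag_iff.2 rfl)
    · have hv : v ∈ univ \ covered A := by
        rw [mem_sdiff]
        exact ⟨mem_univ _, fun hcv => h (by rw [covmem] at hcv; exact hcv)⟩
      have h2 : f v = fL v := by
        rw [hf]; dsimp only
        rw [dif_neg (fun hc2 : ∃ e, e ∈ A ∧ v ∈ e.val => h hc2)]
      exact (hfL1 v hv).2.1 (by rw [← h2, hc])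
  have hmemo : ∀ (v : Fin n) (e : Edge n), e ∈ A → v ∈ e.val → f v ∈ e.val := by
    intro v e he hv
    have := hspec v e he hv
    rw [← this]
    exact Sym2.mem_mk_right v (f v)
  have hLclosed : ∀ v, v ∉ covered A → f v ∉ covered A := by
    intro v hv
    have hvL : v ∈ univ \ covered A := mem_sdiff.2 ⟨mem_univ _, hv⟩
    have h2 : f v = fL v := by
      rw [hf]; dsimp only
      rw [dif_neg (fun hc : ∃ e, e ∈ A ∧ v ∈ e.val =>
        hv ((covmem v).2 ⟨hc.choose, hc.choose_spec⟩))]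
    rw [h2]
    exact (mem_sdiff.1 (hfL1 v hvL).1).2
  refine ⟨f, ?_, hnefix, hspec, hLclosed⟩
  intro v
  by_cases h : ∃ e, e ∈ A ∧ v ∈ e.val
  · obtain ⟨e, he, hv⟩ := h
    have hfv : f v ∈ e.val := hmemo v e he hv
    have h1 : s(f v, f (f v)) = e.val := hspec (f v) e he hfv
    have h2 : s(v, f v) = e.val := hspec v e he hv
    rw [← h2] at h1
    rcases Sym2.eq_iff.1 h1 with ⟨ha, hb⟩ | ⟨ha, hb⟩
    · exact absurd ha (hnefix v)
    · exact hb
  · have hv : v ∉ covered A := fun hcv => h ((covmem v).1 hcv)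
    have hvL : v ∈ univ \ covered A := mem_sdiff.2 ⟨mem_univ _, hv⟩
    have h2 : f v = fL v := by
      rw [hf]; dsimp only
      rw [dif_neg (fun hc : ∃ e, e ∈ A ∧ v ∈ e.val =>
        hv ((covmem v).2 ⟨hc.choose, hc.choose_spec⟩))]
    have hfvL : f v ∉ covered A := hLclosed v hv
    have h3 : f (f v) = fL (f v) := by
      rw [hf]; dsimp only
      rw [dif_neg (fun hc : ∃ e, e ∈ A ∧ (f v) ∈ e.val =>
        hfvL ((covmem (f v)).2 ⟨hc.choose, hc.choose_spec⟩))]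
    rw [h3, h2, (hfL1 v hvL).2.2]

lemma sym2_eq_of_mem {z : Sym2 (Fin n)} {u v : Fin n} (hu : u ∈ z) (hv : v ∈ z)
    (huv : u ≠ v) : z = s(u,v) :=
  (Sym2.mem_and_mem_iff huv).1 ⟨hu, hv⟩

noncomputable def pick (e₀ : Edge n) (s : Finset (Edge n)) : Edge n :=
  if h : s.Nonempty then h.choose else e₀

lemma pick_mem {e₀ : Edge n} {s : Finset (Edge n)} (h : s.Nonempty) : pick e₀ s ∈ s := by
  rw [pick, dif_pos h]; exact h.choose_spec

/-- Avoider's phase-1 strategy: claim a free edge between uncovered vertices. -/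
noncomputable def sA1 (e₀ : Edge n) : Strategy n := fun p =>
  pick e₀ (if (freshP p).Nonempty then freshP p else freeE p)

/-- Avoider's phase-2 strategy: claim a free edge from `C`. -/
noncomputable def sA2 (e₀ : Edge n) (C : Finset (Edge n)) : Strategy n := fun p =>
  pick e₀ (if (C ∩ freeE p).Nonempty then C ∩ freeE p else freeE p)

/-- the combined strategy -/
noncomputable def sAC (e₀ : Edge n) (m : ℕ) (C : Finset (Edge n)) : Strategy n := fun p =>
  if p.1.card < m then sA1 e₀ p else sA2 e₀ C p

lemma freeE_nonempty (p : Position n) (h : p.1 ∪ p.2 ≠ univ) : (freeE p).Nonempty := by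
  rw [freeE, sdiff_nonempty]
  intro hc
  exact h (le_antisymm (subset_univ _) hc)

lemma mem_freeE {p : Position n} {e : Edge n} (h : e ∈ freeE p) : e ∉ p.1 ∪ p.2 :=
  (mem_sdiff.1 h).2

lemma legal_sA1 (e₀ : Edge n) : Legal n (sA1 e₀) := by
  intro p hp
  have hne := freeE_nonempty p hp
  rw [sA1]
  by_cases h : (freshP p).Nonempty
  · rw [if_pos h]
    exact mem_freeE (mem_filter.1 (pick_mem h)).1
  · rw [if_neg h]
    exact mem_freeE (pick_mem hne)

lemma legal_sA2 (e₀ : Edge n) (C : Finset (Edge n)) : Legal n (sA2 e₀ C) := by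
  intro p hp
  have hne := freeE_nonempty p hp
  rw [sA2]
  by_cases h : (C ∩ freeE p).Nonempty
  · rw [if_pos h]
    exact mem_freeE (mem_of_mem_inter_right (pick_mem h))
  · rw [if_neg h]
    exact mem_freeE (pick_mem hne)

lemma legal_sAC (e₀ : Edge n) (m : ℕ) (C : Finset (Edge n)) : Legal n (sAC e₀ m C) := by
  intro p hp
  rw [sAC]
  by_cases h : p.1.card < m
  · rw [if_pos h]; exact legal_sA1 e₀ p hp
  · rw [if_neg h]; exact legal_sA2 e₀ C p hp

lemma play_succ (sA sE : Strategy n) (t : ℕ) :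
    play n sA sE (t+1) =
      (insert (sA (play n sA sE t)) (play n sA sE t).1,
       insert (sE (insert (sA (play n sA sE t)) (play n sA sE t).1, (play n sA sE t).2))
         (play n sA sE t).2) := by
  rfl

lemma play_mono1 (sA sE : Strategy n) {t t' : ℕ} (h : t ≤ t') :
    (play n sA sE t).1 ⊆ (play n sA sE t').1 := by
  induction t' with
  | zero =>
    have : t = 0 := Nat.le_zero.1 h
    subst this; exact Finset.Subset.refl _
  | succ k ih =>
    rcases Nat.lt_or_ge t (k+1) with h2 | h2
    · refine Finset.Subset.trans (ih (Nat.lt_succ_iff.1 h2)) ?_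
      rw [play_succ]
      exact Finset.subset_insert _ _
    · have : t = k + 1 := le_antisymm h h2
      subst this; exact Finset.Subset.refl _

lemma play_mono2 (sA sE : Strategy n) {t t' : ℕ} (h : t ≤ t') :
    (play n sA sE t).2 ⊆ (play n sA sE t').2 := by
  induction t' with
  | zero =>
    have : t = 0 := Nat.le_zero.1 h
    subst this; exact Finset.Subset.refl _
  | succ k ih =>
    rcases Nat.lt_or_ge t (k+1) with h2 | h2
    · refine Finset.Subset.trans (ih (Nat.lt_succ_iff.1 h2)) ?_
      rw [play_succ]
      exact Finset.subset_insert _ _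
    · have : t = k + 1 := le_antisymm h h2
      subst this; exact Finset.Subset.refl _

/-- Phase-1 invariant -/
lemma phase1_inv (e₀ : Edge n) (sE : Strategy n) (hE : Legal n sE) (m : ℕ)
    (hch : ∀ t, t < m → 2 * t + 2 ≤ n.choose 2)
    (hfr : ∀ t, t < m → 2 * t < (n - 2*t).choose 2) :
    ∀ t, t ≤ m →
      (play n (sA1 e₀) sE t).1.card = t ∧ (play n (sA1 e₀) sE t).2.card = t ∧
      Disjoint (play n (sA1 e₀) sE t).1 (play n (sA1 e₀) sE t).2 ∧
      IsMatching (play n (sA1 e₀) sE t).1 := by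
  intro t
  induction t with
  | zero =>
    intro _
    refine ⟨by simp [play], by simp [play], by simp [play], ?_⟩
    intro e he
    simp [play] at he
  | succ k ih =>
    intro hk1
    have hkm : k < m := hk1
    obtain ⟨hA, hEc, hdisj, hM⟩ := ih (Nat.le_of_lt hkm)
    set p := play n (sA1 e₀) sE k with hp
    have huc : (p.1 ∪ p.2).card ≤ 2 * k := by
      calc (p.1 ∪ p.2).card ≤ p.1.card + p.2.card := card_union_le _ _
        _ = 2 * k := by rw [hA, hEc]; ring
    have hcov : (covered p.1).card ≤ 2 * k := by rw [covered_card hM, hA]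
    have hfresh : (freshP p).Nonempty := freshP_nonempty hcov huc (hfr k hkm)
    have hmove : sA1 e₀ p ∈ freshP p := by
      rw [sA1, if_pos hfresh]; exact pick_mem hfresh
    have hmfree : sA1 e₀ p ∉ p.1 ∪ p.2 := mem_freeE (mem_filter.1 hmove).1
    have hmA : sA1 e₀ p ∉ p.1 := fun hc => hmfree (mem_union_left _ hc)
    have hmE : sA1 e₀ p ∉ p.2 := fun hc => hmfree (mem_union_right _ hc)
    have hmunc : ∀ v ∈ (sA1 e₀ p).val, v ∉ covered p.1 := by
      have := (mem_filter.1 hmove).2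
      exact this
    have hcardA' : (insert (sA1 e₀ p) p.1).card = k + 1 := by
      rw [card_insert_of_notMem hmA, hA]
    have hnotuniv : (insert (sA1 e₀ p) p.1, p.2).1 ∪ (insert (sA1 e₀ p) p.1, p.2).2
        ≠ univ := by
      intro hc
      have h1 : ((insert (sA1 e₀ p) p.1) ∪ p.2).card ≤ (k+1) + k :=
        le_trans (card_union_le _ _) (by rw [hcardA', hEc])
      have h2 : ((insert (sA1 e₀ p) p.1, p.2).1 ∪ (insert (sA1 e₀ p) p.1, p.2).2).card
          = n.choose 2 := by rw [hc, card_edge_univ]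
      have := hch k hkm
      simp only at h2
      omega
    have hEmove := hE _ hnotuniv
    rw [mem_union] at hEmove
    push_neg at hEmove
    obtain ⟨hEmA, hEmE⟩ := hEmove
    rw [play_succ, ← hp]
    refine ⟨hcardA', ?_, ?_, ?_⟩
    · rw [card_insert_of_notMem hEmE, hEc]
    · rw [disjoint_left]
      intro x hx hx2
      rw [mem_insert] at hx hx2
      rcases hx with rfl | hx
      · rcases hx2 with h | h
        · exact hEmA (h ▸ mem_insert_self _ _)
        · exact hmE h
      · rcases hx2 with h | h
        · exact hEmA (h ▸ (mem_insert_of_mem hx))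
        · exact (disjoint_left.1 hdisj) hx h
    · intro e he g hg hne v hv
      rw [mem_insert] at he hg
      rcases he with rfl | he <;> rcases hg with rfl | hg
      · exact absurd rfl hne
      · intro hvg
        exact hmunc v hv (mem_filter.2 ⟨mem_univ _, ⟨g, hg, hvg⟩⟩)
      · intro hvg
        exact hmunc v hvg (mem_filter.2 ⟨mem_univ _, ⟨e, he, hv⟩⟩)
      · exact hM e he g hg hne v hv

/-- agreement of the combined strategy with phase 1 -/
lemma runs_agree (e₀ : Edge n) (sE : Strategy n) (C : Finset (Edge n)) (m : ℕ)
    (hcard : ∀ t, t ≤ m → (play n (sA1 e₀) sE t).1.card = t) :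
    ∀ t, t ≤ m → play n (sAC e₀ m C) sE t = play n (sA1 e₀) sE t := by
  intro t
  induction t with
  | zero => intro _; rfl
  | succ k ih =>
    intro hk1
    have hk : k ≤ m := Nat.le_of_lt hk1
    have heq := ih hk
    rw [play_succ, play_succ, heq]
    have hlt : (play n (sA1 e₀) sE k).1.card < m := by rw [hcard k hk]; exact hk1
    simp only [sAC, if_pos hlt]

/-- Phase-2 invariant -/
lemma phase2_inv (e₀ : Edge n) (sE : Strategy n) (hE : Legal n sE)
    (C : Finset (Edge n)) (m : ℕ)
    (hagree : play n (sAC e₀ m C) sE m = play n (sA1 e₀) sE m)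
    (hAm : (play n (sA1 e₀) sE m).1.card = m)
    (hEm : (play n (sA1 e₀) sE m).2.card = m) :
    ∀ t, m ≤ t →
      (∀ s, m ≤ s → s < t → (C ∩ freeE (play n (sAC e₀ m C) sE s)).Nonempty) →
      (∀ s, m ≤ s → s < t → 2 * s + 2 ≤ n.choose 2) →
      (play n (sAC e₀ m C) sE t).1 ⊆ (play n (sA1 e₀) sE m).1 ∪ C ∧
      (play n (sAC e₀ m C) sE t).1.card = t ∧ (play n (sAC e₀ m C) sE t).2.card = t := by
  intro t hmt
  induction t, hmt using Nat.le_induction with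
  | base =>
    intro _ _
    rw [hagree]
    exact ⟨subset_union_left, hAm, hEm⟩
  | succ k hmk ih =>
    intro hgood hch
    obtain ⟨hsub, hA, hEc⟩ := ih (fun s h1 h2 => hgood s h1 (Nat.lt_succ_of_lt h2))
      (fun s h1 h2 => hch s h1 (Nat.lt_succ_of_lt h2))
    set p := play n (sAC e₀ m C) sE k with hp
    have hnlt : ¬ (p.1.card < m) := by rw [hA]; omega
    have hCfree : (C ∩ freeE p).Nonempty := hgood k hmk (Nat.lt_succ_self k)
    have hmove : sAC e₀ m C p ∈ C ∩ freeE p := by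
      rw [sAC]
      simp only [if_neg hnlt]
      rw [sA2, if_pos hCfree]
      exact pick_mem hCfree
    have hmC : sAC e₀ m C p ∈ C := mem_of_mem_inter_left hmove
    have hmfree : sAC e₀ m C p ∉ p.1 ∪ p.2 := mem_freeE (mem_of_mem_inter_right hmove)
    have hmA : sAC e₀ m C p ∉ p.1 := fun hc => hmfree (mem_union_left _ hc)
    have hcardA' : (insert (sAC e₀ m C p) p.1).card = k + 1 := by
      rw [card_insert_of_notMem hmA, hA]
    have hnotuniv : (insert (sAC e₀ m C p) p.1, p.2).1 ∪ (insert (sAC e₀ m C p) p.1, p.2).2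
        ≠ univ := by
      intro hc
      have h1 : ((insert (sAC e₀ m C p) p.1) ∪ p.2).card ≤ (k+1) + k :=
        le_trans (card_union_le _ _) (by rw [hcardA', hEc])
      have h2 : ((insert (sAC e₀ m C p) p.1, p.2).1 ∪ (insert (sAC e₀ m C p) p.1, p.2).2).card
          = n.choose 2 := by rw [hc, card_edge_univ]
      have := hch k hmk (Nat.lt_succ_self k)
      simp only at h2
      omega
    have hEmove := hE _ hnotuniv
    rw [mem_union] at hEmove
    push_neg at hEmove
    obtain ⟨hEmA, hEmE⟩ := hEmove
    rw [play_succ, ← hp]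
    refine ⟨?_, hcardA', ?_⟩
    · intro x hx
      rw [mem_insert] at hx
      rcases hx with rfl | hx
      · exact mem_union_right _ hmC
      · exact hsub hx
    · rw [card_insert_of_notMem hEmE, hEc]

lemma colorable_of_nonmono (f : Fin n → Fin n) (τ : Fin n → Bool) (A : Finset (Edge n))
    (h : ∀ e ∈ A, ¬ monoP f τ e) : (toGraph n A).Colorable 2 := by
  have hcol : ∀ {u v : Fin n}, (toGraph n A).Adj u v →
      (fun x => if sig f τ x then (0 : Fin 2) else 1) u ≠
      (fun x => if sig f τ x then (0 : Fin 2) else 1) v := by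
    intro u v hadj
    rw [toGraph, SimpleGraph.fromEdgeSet_adj] at hadj
    obtain ⟨⟨e, heA, heval⟩, hne⟩ := hadj
    have heA' : e ∈ A := heA
    have hnm := h e heA'
    rw [mono_iff_of_val heval] at hnm
    dsimp only
    cases h1 : sig f τ u <;> cases h2 : sig f τ v <;>
      simp_all
  exact ⟨SimpleGraph.Coloring.mk _ hcol⟩

lemma nonmono_of_matched {f : Fin n → Fin n} {τ : Fin n → Bool} {A : Finset (Edge n)}
    (hinv : ∀ v, f (f v) = v) (hne : ∀ v, f v ≠ v)
    (hspec : ∀ (v : Fin n), ∀ e ∈ A, v ∈ e.val → s(v, f v) = e.val)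
    {e : Edge n} (he : e ∈ A) : ¬ monoP f τ e := by
  have hu : eFst e.val ∈ e.val := (mem_e e.val _).2 (Or.inl rfl)
  have h1 : s(eFst e.val, f (eFst e.val)) = e.val := hspec _ e he hu
  have h2 : s(eFst e.val, eSnd e.val) = e.val := eMk e.val
  have h12 : s(eFst e.val, f (eFst e.val)) = s(eFst e.val, eSnd e.val) :=
    h1.trans h2.symm
  have h3 : f (eFst e.val) = eSnd e.val := by
    rcases Sym2.eq_iff.1 h12 with ⟨_, hb⟩ | ⟨ha, hb⟩
    · exact hb
    · exact absurd ha (eNe e.val e.2)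
  intro hm
  rw [monoP, ← h3, sig_f τ hinv hne] at hm
  cases h4 : sig f τ (eFst e.val) <;> rw [h4] at hm <;> exact Bool.noConfusion hm

/-- The key survival theorem: Avoider can avoid all of `NC2` for `T` rounds. -/
theorem survival (hn2 : 2 ≤ n) (hnev : Even n) (m T : ℕ)
    (hmT : m ≤ T) (h2m : 2 * m ≤ n)
    (hch : ∀ t, t ≤ T → 2 * t + 2 ≤ n.choose 2)
    (hfr : ∀ t, t < m → 2 * t < (n - 2*t).choose 2)
    (hnum : 4 * T + (n - 2*m) ≤ 2 * ((n/2) * (n/2)) + m + 3) :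
    ¬ EnforcerWinsBy n (NC2 n) T := by
  rintro ⟨sE, hE, hwin⟩
  -- a default edge
  have h01 : (⟨0, by omega⟩ : Fin n) ≠ (⟨1, by omega⟩ : Fin n) := by
    intro hc
    have := congrArg Fin.val hc
    simp at this
  set e₀ : Edge n := ⟨s((⟨0, by omega⟩ : Fin n), (⟨1, by omega⟩ : Fin n)),
    by rw [Sym2.mk_isDiag_iff]; exact h01⟩ with he₀
  have hch1 : ∀ t, t < m → 2 * t + 2 ≤ n.choose 2 :=
    fun t ht => hch t (le_of_lt (lt_of_lt_of_le ht hmT))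
  have P1 := phase1_inv e₀ sE hE m hch1 hfr
  obtain ⟨hAm, hEm, hdisjm, hMm⟩ := P1 m le_rfl
  set Ast := (play n (sA1 e₀) sE m).1 with hAst
  set Est := (play n (sA1 e₀) sE m).2 with hEst
  have hcov : (covered Ast).card = 2 * m := by rw [covered_card hMm, hAm]
  have hLcard : ((univ : Finset (Fin n)) \ covered Ast).card = n - 2 * m := by
    rw [card_sdiff_of_subset (subset_univ _), card_univ, Fintype.card_fin, hcov]
  have hLev : Even ((univ : Finset (Fin n)) \ covered Ast).card := by
    rw [hLcard]
    rcases hnev with ⟨c, hc⟩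
    exact ⟨c - m, by omega⟩
  obtain ⟨f, hinv, hnefix, hspec, hLcl⟩ := exists_invol Ast hMm hLev
  set E' := Est.filter (fun e => f (eFst e.val) ≠ eSnd e.val) with hE'
  -- the intra-unit enforcer edges are few
  have hrest : (Est.filter (fun e => ¬ f (eFst e.val) ≠ eSnd e.val)).card ≤ n - 2 * m := by
    rw [← hLcard]
    apply Finset.card_le_card_of_injOn (fun e => eFst e.val)
    · intro e he
      rw [mem_coe, mem_filter, not_not] at he
      obtain ⟨heE, hfe⟩ := he
      rw [mem_coe, mem_sdiff]
      refine ⟨mem_univ _, fun hcov2 => ?_⟩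
      rw [covered, mem_filter] at hcov2
      obtain ⟨-, g, hg, hmem⟩ := hcov2
      have hval : s(eFst e.val, f (eFst e.val)) = g.val := hspec _ g hg hmem
      rw [hfe] at hval
      rw [eMk e.val] at hval
      have : e = g := Subtype.ext hval
      subst this
      exact (disjoint_left.1 hdisjm) hg heE
    · intro e1 h1 e2 h2 hfst
      simp only [coe_filter, Set.mem_setOf_eq, not_not] at h1 h2
      have hfst' : eFst e1.val = eFst e2.val := hfst
      apply Subtype.ext
      rw [← eMk e1.val, ← eMk e2.val, ← h1.2, ← h2.2, hfst']
  have hE'card : m ≤ E'.card + (n - 2 * m) := by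
    have h := card_filter_add_card_filter_not (s := Est)
      (p := fun e => f (eFst e.val) ≠ eSnd e.val)
    rw [← hE'] at h
    rw [hEm] at h
    omega
  obtain ⟨τ, hτ⟩ := exists_waste hinv E'
    (fun e he => (mem_filter.1 he).2)
  set w := (E'.filter (fun e => monoP f τ e)).card with hwdef
  set C := crossE f τ with hC
  have hXcard : (Xside f τ).card = n / 2 := by
    have h1 := card_side_add f τ
    have h2 := card_side_eq τ hinv hnefix
    omega
  have hYcard : (Yside f τ).card = n / 2 := by
    have h1 := card_side_add f τ
    have h2 := card_side_eq τ hinv hnefix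
    omega
  have hCcard : C.card = (n/2) * (n/2) := by
    rw [hC, card_crossE τ, hXcard, hYcard]
  set sA := sAC e₀ m C with hsA
  have hLegal : Legal n sA := legal_sAC e₀ m C
  have hagree := runs_agree e₀ sE C m (fun t ht => (P1 t ht).1) m le_rfl
  have P2 := phase2_inv e₀ sE hE C m hagree hAm hEm
  obtain ⟨Lw, hLw, hsubw⟩ := hwin sA hLegal
  by_cases hgood : ∀ s, m ≤ s → s < T → (C ∩ freeE (play n sA sE s)).Nonempty
  · obtain ⟨hsubT, -, -⟩ := P2 T hmT (fun s h1 h2 => hgood s h1 h2)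
      (fun s _ h2 => hch s (le_of_lt h2))
    apply hLw
    apply colorable_of_nonmono f τ
    intro e he
    have heAC : e ∈ Ast ∪ C := hsubT (hsubw he)
    rw [mem_union] at heAC
    rcases heAC with heA | heC
    · exact nonmono_of_matched hinv hnefix hspec heA
    · rw [hC, crossE, mem_filter] at heC
      exact heC.2
  · push_neg at hgood
    obtain ⟨s1, hms1, hs1T, hemp1⟩ := hgood
    have hQ : ∃ s, m ≤ s ∧ s < T ∧ ¬(C ∩ freeE (play n sA sE s)).Nonempty :=
      ⟨s1, hms1, hs1T, Finset.not_nonempty_iff_eq_empty.2 hemp1⟩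
    set s₀ := Nat.find hQ with hs₀
    obtain ⟨hms₀, hs₀T, hemp₀⟩ := Nat.find_spec hQ
    have hgood' : ∀ s, m ≤ s → s < s₀ → (C ∩ freeE (play n sA sE s)).Nonempty := by
      intro s h1 h2
      by_contra hcon
      exact Nat.find_min hQ h2 ⟨h1, lt_trans h2 hs₀T, hcon⟩
    obtain ⟨-, hA0, hE0⟩ := P2 s₀ hms₀ hgood'
      (fun s _ h2 => hch s (le_of_lt (lt_trans h2 hs₀T)))
    have hCsub : C ⊆ (play n sA sE s₀).1 ∪ (play n sA sE s₀).2 := by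
      intro e he
      by_contra hc
      exact hemp₀ ⟨e, mem_inter.2 ⟨he, mem_sdiff.2 ⟨mem_univ _, hc⟩⟩⟩
    have hWsub : (E'.filter (fun e => monoP f τ e)) ⊆
        (play n sA sE s₀).1 ∪ (play n sA sE s₀).2 := by
      intro e he
      apply mem_union_right
      have h1 : e ∈ Est := (mem_filter.1 (mem_filter.1 he).1).1
      have h2 : Est = (play n sA sE m).2 := by rw [hEst, hagree]
      rw [h2] at h1
      exact play_mono2 sA sE hms₀ h1
    have hdisjCW : Disjoint C (E'.filter (fun e => monoP f τ e)) := by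
      rw [disjoint_left]
      intro e heC heW
      rw [hC, crossE, mem_filter] at heC
      exact heC.2 (mem_filter.1 heW).2
    have hcount : C.card + w ≤ 2 * s₀ := by
      have h1 : (C ∪ E'.filter (fun e => monoP f τ e)).card
          ≤ ((play n sA sE s₀).1 ∪ (play n sA sE s₀).2).card :=
        card_le_card (union_subset hCsub hWsub)
      have h2 : ((play n sA sE s₀).1 ∪ (play n sA sE s₀).2).card ≤ 2 * s₀ := by
        calc ((play n sA sE s₀).1 ∪ (play n sA sE s₀).2).card
            ≤ (play n sA sE s₀).1.card + (play n sA sE s₀).2.card := card_union_le _ _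
          _ = 2 * s₀ := by rw [hA0, hE0]; ring
      rw [card_union_of_disjoint hdisjCW] at h1
      omega
    rw [hCcard] at hcount
    -- final numeric contradiction
    have hfin1 : m ≤ 2 * w + (n - 2 * m) := by omega
    omega

lemma EWB_mono {F : Set (Finset (Edge n))} {t t' : ℕ} (h : t ≤ t') :
    EnforcerWinsBy n F t → EnforcerWinsBy n F t' := by
  rintro ⟨sE, hE, hw⟩
  refine ⟨sE, hE, fun sA hA => ?_⟩
  obtain ⟨L, hL, hsub⟩ := hw sA hA
  exact ⟨L, hL, hsub.trans (play_mono1 sA sE h)⟩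

end NCLower

open NCLower in
/-- for every sufficiently large even `n`,
`τ_E(NC²_n) ≥ n²/8 + (n-2)/12`. -/
theorem tauE_nonbipartite_lower :
    ∃ n₀ : ℕ, ∀ n : ℕ, n₀ ≤ n → Even n →
      ((⌈(n : ℝ) ^ 2 / 8 + ((n : ℝ) - 2) / 12⌉₊ : ℕ) : ℕ∞) ≤ tauE n (NC2 n) := by
  use 1000000
  intro n hn hev
  set N := ⌈(n : ℝ) ^ 2 / 8 + ((n : ℝ) - 2) / 12⌉₊ with hN
  -- numeric facts
  obtain ⟨K, hK⟩ := hev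
  have hK2 : n = 2 * K := by omega
  set r := Nat.sqrt n with hr
  have hr1 : r * r ≤ n := by
    have := Nat.sqrt_le' n
    rwa [pow_two] at this
  have hr2 : n < (r + 1) * (r + 1) := by
    have := Nat.lt_succ_sqrt' n
    rwa [Nat.succ_eq_add_one, pow_two] at this
  have hrbig : 1000 ≤ r := by
    rw [hr]
    refine Nat.le_sqrt'.2 ?_
    calc (1000 : ℕ)^2 = 1000000 := by norm_num
      _ ≤ n := hn
  have hrK : 9 * r ≤ K := by nlinarith
  have hKbig : 9000 ≤ K := by omega
  have hKK2 : 9000 * K ≤ K * K := Nat.mul_le_mul_right K hKbig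
  have hn2 : (2 : ℝ) ≤ (n : ℝ) := by
    have : (2 : ℕ) ≤ n := by omega
    exact_mod_cast this
  have hxnn : (0:ℝ) ≤ (n : ℝ) ^ 2 / 8 + ((n : ℝ) - 2) / 12 := by
    have : (0:ℝ) ≤ (n:ℝ)^2 := sq_nonneg _
    nlinarith
  have hNL : n * n ≤ 8 * N := by
    have h1 : ((n : ℝ) ^ 2 / 8 + ((n : ℝ) - 2) / 12) ≤ (N : ℝ) := Nat.le_ceil _
    have h2 : ((n : ℝ) * n) ≤ 8 * (N:ℝ) := by nlinarith
    exact_mod_cast h2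
  have hNU : 24 * N ≤ 3 * (n * n) + 2 * n + 19 := by
    have h1 : (N : ℝ) < (n : ℝ) ^ 2 / 8 + ((n : ℝ) - 2) / 12 + 1 :=
      Nat.ceil_lt_add_one hxnn
    have h2 : (24 * N : ℝ) < 3 * ((n:ℝ) * n) + 2 * n + 20 := by nlinarith
    have h3 : (24 * N : ℕ) < 3 * (n * n) + 2 * n + 20 := by exact_mod_cast h2
    omega
  have hKK4 : n * n = 4 * (K * K) := by rw [hK2]; ring
  have hNpos : 1 ≤ N := by nlinarith
  -- choose parameters
  set T := N - 1 with hT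
  set m := K - r - 1 with hm
  have hchoose : n.choose 2 = K * (2 * K) - K := by
    rw [Nat.choose_two_right, hK2]
    have e1 : ∀ j : ℕ, 2 * K * j = 2 * (K * j) := fun j => by ring
    rw [e1, Nat.mul_div_cancel_left _ (by norm_num), Nat.mul_sub, Nat.mul_one]
  have hKKm : K * (2 * K) = 2 * (K * K) := by ring
  have hmain := survival (n := n) (by omega) ⟨K, hK⟩ m T
    -- hmT
    (by omega)
    -- h2m
    (by omega)
    -- hch
    (by
      intro t ht
      omega)
    -- hfr
    (by
      intro t ht
      have h1 : 2 * r + 4 ≤ n - 2 * t := by omega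
      have h2 : (2 * r + 4).choose 2 ≤ (n - 2 * t).choose 2 := Nat.choose_le_choose 2 h1
      have h3 : (2 * r + 4).choose 2 = (r + 2) * (2 * r + 3) := by
        rw [Nat.choose_two_right]
        have e0 : 2*r+4-1 = 2*r+3 := by omega
        rw [e0]
        have e1 : (2*r+4) * (2*r+3) = 2 * ((r+2)*(2*r+3)) := by ring
        rw [e1, Nat.mul_div_cancel_left _ (by norm_num)]
      have hrr : (r+1)*(r+1) ≤ (r+2)*(2*r+3) := by nlinarith
      omega)
    -- hnum
    (by
      have hdiv : n / 2 = K := by omega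
      rw [hdiv]
      omega)
  -- conclude
  have key : ∀ t, EnforcerWinsBy n (NC2 n) t → N ≤ t := by
    intro t hwt
    by_contra hlt
    push_neg at hlt
    exact hmain (EWB_mono (by omega) hwt)
  rw [tauE]
  apply le_sInf
  rintro b ⟨t, ht, rfl⟩
  have h := key t ht
  show (N : ℕ∞) ≤ (t : ℕ∞)
  exact_mod_cast h
end

section
/- There exists n₀ such that for every n ≥ n₀ the following holds with k = log₂ n: for every integer r ≥ 2 and all positive integers c₁ ≤ c₂ ≤ … ≤ c_r with c₁ + c₂ + … + c_r = n, one has Σ_{i=1}^{r} C(c_i, 2) + 4k·Σ_{i=1}^{r−1} c_i ≤ C(n−1, 2) + 4k, where C(m,2) = m(m−1)/2; i.e., the left-hand side is maximized (among r ≥ 2) at r = 2, c₁ = 1, c₂ = n−1. -/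
lemma aux_poly_bound (t : ℝ) (ht : 256 ≤ t) :
    18 * (t*t*t) ≤ ((t*t) - 1) * ((t*t) - 2) / 2 := by
  nlinarith [mul_nonneg (mul_nonneg (mul_nonneg
      (by linarith : (0:ℝ) ≤ t - 256) (by linarith : (0:ℝ) ≤ t)) (by linarith : (0:ℝ) ≤ t)) (by linarith : (0:ℝ) ≤ t),
    mul_nonneg (mul_nonneg (by linarith : (0:ℝ) ≤ t - 1) (by linarith : (0:ℝ) ≤ t)) (by linarith : (0:ℝ) ≤ t)]

set_option maxHeartbeats 1000000 in
/-- for all sufficiently large `n`, with `k = log₂ n`,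
for every `r ≥ 2` and all positive integers `c₁ ≤ c₂ ≤ … ≤ c_r` summing to `n`,
`Σ_{i=1}^{r} C(c_i, 2) + 4k·Σ_{i=1}^{r-1} c_i ≤ C(n-1, 2) + 4k`. -/
theorem component_sum_bound :
    ∃ n₀ : ℕ, ∀ n : ℕ, n₀ ≤ n → ∀ r : ℕ, 2 ≤ r → ∀ c : Fin r → ℕ,
      (∀ i, 0 < c i) → Monotone c → (∑ i, c i) = n →
      (∑ i, ((c i).choose 2 : ℝ)) +
          4 * Real.logb 2 n *
            (∑ i ∈ Finset.univ.filter (fun i : Fin r => (i : ℕ) < r - 1), (c i : ℝ)) ≤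
        ((n - 1).choose 2 : ℝ) + 4 * Real.logb 2 n := by
  use 65536
  intro n hn r hr c hpos hmono hsum
  set k := Real.logb 2 n with hk
  have hn1 : (1:ℝ) ≤ (n:ℝ) := by
    have : (1:ℕ) ≤ n := by omega
    exact_mod_cast this
  have hk0 : 0 ≤ k := Real.logb_nonneg (by norm_num) hn1
  have hrpos : 0 < r := by omega
  set last : Fin r := ⟨r - 1, by omega⟩ with hlast
  have hmax : ∀ i : Fin r, c i ≤ c last := by
    intro i
    apply hmono
    have := i.isLt
    simp only [Fin.le_def, hlast]
    omega
  set F := Finset.univ.filter (fun i : Fin r => (i : ℕ) < r - 1) with hF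
  have hsplit : ∀ f : Fin r → ℝ, (∑ i, f i) = (∑ i ∈ F, f i) + f last := by
    intro f
    have h1 : Finset.univ.filter (fun i : Fin r => ¬ ((i:ℕ) < r - 1)) = {last} := by
      ext i
      have := i.isLt
      simp [hlast, Fin.ext_iff]
      omega
    rw [← Finset.sum_filter_add_sum_filter_not Finset.univ
      (fun i : Fin r => (i:ℕ) < r-1) f, h1, Finset.sum_singleton]
  set S : ℝ := ∑ i ∈ F, (c i : ℝ) with hS
  set M : ℝ := (c last : ℝ) with hM
  have hsumR : (∑ i, (c i : ℝ)) = n := by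
    rw [← hsum]; push_cast; rfl
  have hSM : S + M = n := by
    have := hsplit (fun i => (c i : ℝ))
    rw [hsumR] at this
    linarith [this]
  have hM1 : 1 ≤ M := by
    have := hpos last
    simp only [hM]
    exact_mod_cast this
  have hzero : (⟨0, hrpos⟩ : Fin r) ∈ F := by
    simp [hF]; omega
  have hterm_nonneg : ∀ i ∈ F, (0:ℝ) ≤ (c i : ℝ) := by
    intro i _; positivity
  have hS1 : 1 ≤ S := by
    have h1 : (1:ℝ) ≤ (c ⟨0, hrpos⟩ : ℝ) := by exact_mod_cast hpos _
    have := Finset.single_le_sum hterm_nonneg hzero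
    linarith
  have hcast : ∀ a : ℕ, ((a.choose 2 : ℕ) : ℝ) = (a:ℝ) * ((a:ℝ) - 1) / 2 :=
    fun a => Nat.cast_choose_two (K := ℝ) (a := a)
  -- bound each c i ≤ single sum
  have hle_S : ∀ i ∈ F, (c i : ℝ) ≤ S := by
    intro i hi
    exact Finset.single_le_sum hterm_nonneg hi
  have hsum_sq : (∑ i ∈ F, ((c i).choose 2 : ℝ)) ≤ (S * S - S) / 2 := by
    have h1 : (∑ i ∈ F, ((c i):ℝ) * ((c i):ℝ)) ≤ S * S := by
      calc (∑ i ∈ F, ((c i):ℝ) * ((c i):ℝ)) ≤ ∑ i ∈ F, ((c i):ℝ) * S := by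
            apply Finset.sum_le_sum
            intro i hi
            exact mul_le_mul_of_nonneg_left (hle_S i hi) (hterm_nonneg i hi)
        _ = S * S := by rw [← Finset.sum_mul]
    calc (∑ i ∈ F, ((c i).choose 2 : ℝ))
        = ∑ i ∈ F, (((c i):ℝ) * (((c i):ℝ) - 1) / 2) := by
          apply Finset.sum_congr rfl; intro i _; exact hcast _
      _ = ((∑ i ∈ F, ((c i):ℝ) * ((c i):ℝ)) - S) / 2 := by
          rw [hS, ← Finset.sum_sub_distrib, ← Finset.sum_div]
          congr 1
          apply Finset.sum_congr rfl
          intro i _; ring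
      _ ≤ (S * S - S) / 2 := by linarith
  have hgoalsplit := hsplit (fun i => ((c i).choose 2 : ℝ))
  have hMchoose : ((c last).choose 2 : ℝ) = M * (M - 1) / 2 := hcast _
  have hRHS : (((n-1).choose 2 : ℕ) : ℝ) = ((n:ℝ) - 1) * ((n:ℝ) - 2) / 2 := by
    rw [hcast]
    have h1 : (((n-1 : ℕ)):ℝ) = (n:ℝ) - 1 := by
      have : (1:ℕ) ≤ n := by omega
      push_cast [Nat.cast_sub this]; ring
    rw [h1]; ring
  rw [hgoalsplit, hMchoose, hRHS]
  by_cases hcase : 4 * k + 1 ≤ M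
  · nlinarith [mul_nonneg (by linarith : (0:ℝ) ≤ S - 1) (by linarith : (0:ℝ) ≤ M - 1 - 4*k),
      hsum_sq, hSM, hS1, hM1]
  · push_neg at hcase
    -- every c i ≤ M < 4k+1
    have hsmall : (∑ i ∈ F, ((c i).choose 2 : ℝ)) ≤ 2 * k * S := by
      calc (∑ i ∈ F, ((c i).choose 2 : ℝ))
          = ∑ i ∈ F, (((c i):ℝ) * (((c i):ℝ) - 1) / 2) := by
            apply Finset.sum_congr rfl; intro i _; exact hcast _
        _ ≤ ∑ i ∈ F, ((c i):ℝ) * (4*k) / 2 := by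
            apply Finset.sum_le_sum
            intro i hi
            have h1 : ((c i):ℝ) ≤ M := by
              simp only [hM]; exact_mod_cast hmax i
            have h2 : (0:ℝ) ≤ (c i : ℝ) := hterm_nonneg i hi
            nlinarith
        _ = 2 * k * S := by
            rw [hS, ← Finset.sum_div, ← Finset.sum_mul]
            ring
    have hMsmall : M * (M - 1) / 2 ≤ 2 * k * M := by nlinarith
    -- k ≤ 3 √n
    set t := Real.sqrt n with ht
    have htn : t * t = n := Real.mul_self_sqrt (by positivity)
    have ht256 : 256 ≤ t := by
      rw [ht]
      have h65 : (65536:ℝ) ≤ (n:ℝ) := by exact_mod_cast hn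
      have h1 : Real.sqrt (65536:ℝ) = 256 := by
        rw [show (65536:ℝ) = 256^2 by norm_num, Real.sqrt_sq (by norm_num : (0:ℝ) ≤ 256)]
      calc (256:ℝ) = Real.sqrt 65536 := h1.symm
        _ ≤ Real.sqrt n := Real.sqrt_le_sqrt h65
    have hlogn : Real.log n ≤ 2 * t := by
      have h1 : Real.log (n:ℝ) = 2 * Real.log t := by
        rw [ht, Real.log_sqrt (by positivity)]; ring
      have h2 : Real.log t ≤ t - 1 := Real.log_le_sub_one_of_pos (by linarith)
      linarith
    have hk3 : k ≤ 3 * t := by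
      have hlog2 : (0.6931471803 : ℝ) < Real.log 2 := Real.log_two_gt_d9
      have hkl : k * Real.log 2 = Real.log n := by
        rw [hk, Real.logb]
        field_simp
      have ht0 : (0:ℝ) ≤ t := by linarith
      have h2 : (3 * t) * (0.6931471803:ℝ) ≤ (3 * t) * Real.log 2 :=
        mul_le_mul_of_nonneg_left hlog2.le (by linarith)
      have h1 : k * Real.log 2 ≤ (3 * t) * Real.log 2 := by
        rw [hkl]; linarith
      exact le_of_mul_le_mul_right h1 (by linarith)
    have hSn : S ≤ (n:ℝ) := by linarith
    have hMn : M ≤ (n:ℝ) := by linarith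
    have h4kS : 4 * k * S ≤ 4 * k * n := by
      have := mul_le_mul_of_nonneg_left hSn (by linarith : (0:ℝ) ≤ 4 * k)
      linarith
    have ht0 : (0:ℝ) ≤ t := by linarith
    have hbig : 6 * k * (n:ℝ) ≤ ((n:ℝ) - 1) * ((n:ℝ) - 2) / 2 := by
      have h1 : 6 * k * (t*t) ≤ 18 * (t*t*t) := by
        have h := mul_le_mul_of_nonneg_right hk3 (mul_nonneg ht0 ht0)
        nlinarith [h]
      have h2 := aux_poly_bound t ht256
      rw [← htn]
      linarith
    have hk2SM : 2 * k * S + 2 * k * M = 2 * k * (n:ℝ) := by rw [← hSM]; ring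
    linarith [hsmall, hMsmall, h4kS, hbig, hk2SM, hk0]
end
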